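/- The parking (jamming) density converges to (1 − e^{−2})/2: the sequence L_n/n tends to (1 − e^{−2})/2 as n → ∞. -/

import Mathlib

/-- `Lseg n = Σ_{k=1}^{n} (−1)^{k+1} (2^{k−1}/k!) (n−k+1)`, the expected number of
transmissions in one slot from a fully occupied segment of `n` nodes (so `Lseg 0 = 0`). -/
noncomputable def Lseg (n : ℕ) : ℝ :=
  ∑ k ∈ Finset.Icc 1 n,
    (-1 : ℝ) ^ (k + 1) * (2 ^ (k - 1) / (Nat.factorial k : ℝ)) * ((n : ℝ) - (k : ℝ) + 1)

noncomputable def cterm (k : ℕ) : ℝ := -(1/2) * ((-2 : ℝ) ^ k / (Nat.factorial k : ℝ))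

lemma hasSum_cterm : HasSum cterm (-(1/2) * Real.exp (-2)) := by
  have h := NormedSpace.expSeries_div_hasSum_exp (-2 : ℝ)
  rw [← Real.exp_eq_exp_ℝ] at h
  exact h.mul_left _

lemma summable_k_mul : Summable (fun k : ℕ => (k : ℝ) * cterm k) := by
  rw [← summable_nat_add_iff 1]
  have : (fun k : ℕ => ((k + 1 : ℕ) : ℝ) * cterm (k + 1))
      = fun k : ℕ => (-2 : ℝ) * cterm k := by
    funext k
    simp only [cterm, Nat.factorial_succ, Nat.cast_mul, Nat.cast_add, Nat.cast_one,
      pow_succ]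
    have h1 : ((k.factorial : ℝ)) ≠ 0 := Nat.cast_ne_zero.mpr k.factorial_pos.ne'
    field_simp
  rw [this]
  exact hasSum_cterm.summable.mul_left _

lemma cterm_eq (k : ℕ) (hk : 1 ≤ k) :
    (-1 : ℝ) ^ (k + 1) * (2 ^ (k - 1) / (Nat.factorial k : ℝ)) = cterm k := by
  obtain ⟨m, rfl⟩ : ∃ m, k = m + 1 := ⟨k - 1, (Nat.succ_pred_eq_of_pos hk).symm⟩
  simp only [cterm, Nat.add_sub_cancel]
  rw [show ((-2 : ℝ)) ^ (m + 1) = (-1) ^ (m + 1) * 2 ^ (m + 1) by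
    rw [← neg_one_mul, mul_pow]]
  ring

lemma sum_Icc_eq (f : ℕ → ℝ) (n : ℕ) :
    ∑ k ∈ Finset.Icc 1 n, f k = ∑ k ∈ Finset.range n, f (k + 1) := by
  rw [← Finset.Ico_add_one_right_eq_Icc, Finset.sum_Ico_eq_sum_range]
  simp [add_comm]

/-- The parking (jamming) density converges: `L_n/n → (1 − e^{−2})/2` as `n → ∞`. -/
theorem Lseg_div_tendsto :
    Filter.Tendsto (fun n : ℕ => Lseg n / (n : ℝ)) Filter.atTop
      (nhds ((1 - Real.exp (-2)) / 2)) := by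
  set d : ℕ → ℝ := fun k => cterm k * (1 - (k : ℝ)) with hd
  have hdsum : Summable d := by
    have : d = fun k => cterm k - (k : ℝ) * cterm k := by
      funext k; simp [hd]; ring
    rw [this]
    exact hasSum_cterm.summable.sub summable_k_mul
  obtain ⟨t, ht⟩ : Summable fun k => d (k + 1) := hdsum.comp_injective (add_left_injective 1)
  have hc0 : cterm 0 = -(1/2) := by simp [cterm]
  have hS : HasSum (fun k => cterm (k + 1)) ((1 - Real.exp (-2)) / 2) := by
    have := (hasSum_nat_add_iff' (f := cterm) 1).mpr hasSum_cterm
    simp only [Finset.range_one, Finset.sum_singleton, hc0] at this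
    rw [show (1 - Real.exp (-2)) / 2 = -(1 / 2) * Real.exp (-2) - -(1 / 2) by ring]
    exact this
  have hTS : Filter.Tendsto (fun n : ℕ => ∑ k ∈ Finset.range n, cterm (k + 1))
      Filter.atTop (nhds ((1 - Real.exp (-2)) / 2)) := hS.tendsto_sum_nat
  have hTT : Filter.Tendsto
      (fun n : ℕ => (∑ k ∈ Finset.range n, d (k + 1)) * (1 / (n : ℝ)))
      Filter.atTop (nhds 0) := by
    have := ht.tendsto_sum_nat.mul tendsto_one_div_atTop_nhds_zero_nat
    simpa using this
  have key : ∀ᶠ n : ℕ in Filter.atTop, (fun n : ℕ =>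
      (∑ k ∈ Finset.range n, cterm (k + 1)) +
        (∑ k ∈ Finset.range n, d (k + 1)) * (1 / (n : ℝ))) n
      = Lseg n / (n : ℝ) := by
    filter_upwards [Filter.eventually_ge_atTop 1] with n hn
    have hn0 : ((n : ℝ)) ≠ 0 := Nat.cast_ne_zero.mpr (by omega)
    have hL : Lseg n = (∑ k ∈ Finset.range n, cterm (k + 1)) * n
        + ∑ k ∈ Finset.range n, d (k + 1) := by
      rw [Lseg, ← sum_Icc_eq, ← sum_Icc_eq, Finset.sum_mul, ← Finset.sum_add_distrib]
      refine Finset.sum_congr rfl fun k hk => ?_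
      rw [cterm_eq k (Finset.mem_Icc.mp hk).1]
      simp only [hd]
      ring
    rw [hL]
    field_simp
  have := (hTS.add hTT)
  rw [add_zero] at this
  exact Filter.Tendsto.congr' key this
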